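/- Let X be a finite-dimensional real normed space, L : X → X linear, and R : ℝ × X → X continuous with ‖R(λ,x)‖/‖x‖ → 0 as 0 ≠ ‖x‖ → 0 uniformly for λ in bounded sets. If λ₀ = 0 is a bifurcation point of the equation λx = Lx + R(λ,x), then 0 is an eigenvalue of L, i.e. L is not injective. -/
import Mathlib


open Filter

/-- In a finite-dimensional real normed space, with L linear and R continuous
and of higher order at the origin uniformly for λ bounded, if λ₀ = 0 is a bifurcation point
of λx = Lx + R(λ,x) then 0 is an eigenvalue of L, i.e. L is not injective. -/
theorem stmt2 {X : Type*} [NormedAddCommGroup X] [NormedSpace ℝ X] [FiniteDimensional ℝ X]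
    (L : X →ₗ[ℝ] X)
    (R : ℝ × X → X) (hRcont : Continuous R)
    (hsmall : ∀ C > (0 : ℝ), ∀ ε > (0 : ℝ), ∃ δ > (0 : ℝ), ∀ lam : ℝ, |lam| ≤ C →
      ∀ x : X, x ≠ 0 → ‖x‖ < δ → ‖R (lam, x)‖ ≤ ε * ‖x‖)
    (hbif : ∃ (lams : ℕ → ℝ) (xs : ℕ → X),
      (∀ n, xs n ≠ 0 ∧ lams n • xs n = L (xs n) + R (lams n, xs n)) ∧
      Tendsto lams atTop (nhds 0) ∧
      Tendsto (fun n => ‖xs n‖) atTop (nhds 0)) :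
    (∃ x : X, x ≠ 0 ∧ L x = 0) ∧ ¬ Function.Injective L := by
  obtain ⟨lams, xs, h, hl, hx⟩ := hbif
  have hxne : ∀ n, xs n ≠ 0 := fun n => (h n).1
  set ys : ℕ → X := fun n => ‖xs n‖⁻¹ • xs n with hys
  have hnorm1 : ∀ n, ‖ys n‖ = 1 := by
    intro n
    have hpos : (0:ℝ) < ‖xs n‖ := norm_pos_iff.mpr (hxne n)
    simp [hys, norm_smul, abs_of_pos (inv_pos.mpr hpos), inv_mul_cancel₀ hpos.ne']
  -- L applied to ys
  have hLys : ∀ n, L (ys n) = lams n • ys n - ‖xs n‖⁻¹ • R (lams n, xs n) := by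
    intro n
    have := (h n).2
    simp only [hys, map_smul, smul_comm (lams n) (‖xs n‖⁻¹)]
    rw [this]
    rw [smul_add]
    abel
  -- the remainder term tends to 0
  have hRsmall : Tendsto (fun n => ‖xs n‖⁻¹ * ‖R (lams n, xs n)‖) atTop (nhds 0) := by
    rw [Metric.tendsto_atTop]
    intro ε hε
    obtain ⟨δ, hδ, hδ'⟩ := hsmall 1 one_pos (ε/2) (half_pos hε)
    have h1 : ∀ᶠ n in atTop, |lams n| ≤ 1 := by
      have := (hl.eventually (Metric.ball_mem_nhds (0:ℝ) one_pos))
      filter_upwards [this] with n hn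
      simpa [Real.dist_eq] using le_of_lt hn
    have h2 : ∀ᶠ n in atTop, ‖xs n‖ < δ := by
      have := (hx.eventually (gt_mem_nhds hδ))
      filter_upwards [this] with n hn using hn
    obtain ⟨N, hN⟩ := (h1.and h2).exists_forall_of_atTop
    refine ⟨N, fun n hn => ?_⟩
    obtain ⟨ha, hb⟩ := hN n hn
    have hpos : (0:ℝ) < ‖xs n‖ := norm_pos_iff.mpr (hxne n)
    have := hδ' (lams n) ha (xs n) (hxne n) hb
    have hle : ‖xs n‖⁻¹ * ‖R (lams n, xs n)‖ ≤ ε/2 := by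
      rw [inv_mul_le_iff₀ hpos, mul_comm]
      exact this
    have hnn : (0:ℝ) ≤ ‖xs n‖⁻¹ * ‖R (lams n, xs n)‖ :=
      mul_nonneg (inv_nonneg.mpr (norm_nonneg _)) (norm_nonneg _)
    rw [Real.dist_eq]
    rw [abs_sub_comm]
    rw [abs_of_nonpos (by linarith)]
    linarith
  -- hence L (ys n) → 0
  have hLto0 : Tendsto (fun n => L (ys n)) atTop (nhds 0) := by
    refine squeeze_zero_norm
      (a := fun n => |lams n| + ‖xs n‖⁻¹ * ‖R (lams n, xs n)‖) (f := fun n => L (ys n))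
      (fun n => ?_) ?_
    · show ‖L (ys n)‖ ≤ |lams n| + ‖xs n‖⁻¹ * ‖R (lams n, xs n)‖
      rw [hLys n]
      calc ‖lams n • ys n - ‖xs n‖⁻¹ • R (lams n, xs n)‖
          ≤ ‖lams n • ys n‖ + ‖‖xs n‖⁻¹ • R (lams n, xs n)‖ := norm_sub_le _ _
        _ = |lams n| + ‖xs n‖⁻¹ * ‖R (lams n, xs n)‖ := by
            rw [norm_smul, hnorm1 n, norm_smul, Real.norm_eq_abs, Real.norm_eq_abs,
              abs_of_nonneg (inv_nonneg.mpr (norm_nonneg (xs n))), mul_one]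
    · have : Tendsto (fun n => |lams n|) atTop (nhds 0) := by
        simpa using hl.abs
      simpa using this.add hRsmall
  -- compactness: extract convergent subsequence of ys
  have hcpt : IsCompact (Metric.sphere (0:X) 1) := isCompact_sphere 0 1
  have hmem : ∀ n, ys n ∈ Metric.sphere (0:X) 1 := by
    intro n; simp [mem_sphere_iff_norm, hnorm1 n]
  obtain ⟨y, hy, φ, hφ, hyto⟩ := hcpt.tendsto_subseq hmem
  have hyn : y ≠ 0 := by
    intro hy0
    rw [hy0] at hy
    simp at hy
  have hLcont : Continuous L := L.continuous_of_finiteDimensional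
  have h1 : Tendsto (fun k => L (ys (φ k))) atTop (nhds (L y)) :=
    (hLcont.continuousAt.tendsto.comp hyto)
  have h2 : Tendsto (fun k => L (ys (φ k))) atTop (nhds 0) :=
    hLto0.comp (hφ.tendsto_atTop)
  have hLy : L y = 0 := tendsto_nhds_unique h1 h2
  refine ⟨⟨y, hyn, hLy⟩, fun hinj => ?_⟩
  exact hyn (hinj (by simpa using hLy))
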